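/- arXiv:0804.2029 — 6 statements merged into one kernel-verified Lean document; each statement's English description precedes it below -/
import Mathlib

section
/- Let d ≥ 1, let D ⊆ ℝ^d be a nonempty bounded open set, and let V : D → ℝ be differentiable on D such that V(x) → +∞ as x approaches the boundary of D. Then for every nonzero vector v ∈ ℝ^d there exists a point x ∈ D with ⟨∇V(x), v⟩ > 0. -/
open scoped RealInnerProductSpace

/-- If `V : D → ℝ` is differentiable on a nonempty bounded open set `D ⊆ ℝ^d` and
`V(x) → +∞` as `x` approaches the boundary of `D`, then for every nonzero `v ∈ ℝ^d`
there is `x ∈ D` with `⟨∇V(x), v⟩ > 0`. -/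
theorem stmt_1 (d : ℕ) (hd : 1 ≤ d)
    (D : Set (EuclideanSpace ℝ (Fin d)))
    (hD_ne : D.Nonempty) (hD_bdd : Bornology.IsBounded D) (hD_open : IsOpen D)
    (V : EuclideanSpace ℝ (Fin d) → ℝ)
    (gradV : EuclideanSpace ℝ (Fin d) → EuclideanSpace ℝ (Fin d))
    (hV : ∀ x ∈ D, HasGradientAt V (gradV x) x)
    (hblow : ∀ M : ℝ, ∃ K : Set (EuclideanSpace ℝ (Fin d)),
      K ⊆ D ∧ IsCompact K ∧ ∀ x ∈ D \ K, M ≤ V x)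
    (v : EuclideanSpace ℝ (Fin d)) (hv : v ≠ 0) :
    ∃ x ∈ D, 0 < ⟪gradV x, v⟫ := by
  by_contra hcon
  push_neg at hcon
  obtain ⟨x₀, hx₀⟩ := hD_ne
  have hv' : 0 < ‖v‖ := norm_pos_iff.2 hv
  set L : ℝ → EuclideanSpace ℝ (Fin d) := fun t => x₀ + t • v with hLdef
  have hLderiv : ∀ t : ℝ, HasDerivAt L v t := by
    intro t
    simpa [hLdef] using ((hasDerivAt_id t).smul_const v).const_add x₀
  have hLcont : Continuous L := by continuity
  obtain ⟨R, hR⟩ := hD_bdd.subset_ball 0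
  set A : Set ℝ := {t | 0 ≤ t ∧ L t ∉ D} with hAdef
  have hA_closed : IsClosed A := by
    have : A = Set.Ici (0:ℝ) ∩ L ⁻¹' Dᶜ := rfl
    rw [this]
    exact isClosed_Ici.inter (hD_open.isClosed_compl.preimage hLcont)
  have hA_ne : A.Nonempty := by
    set s : ℝ := (|R| + ‖x₀‖) / ‖v‖ + 1 with hsdef
    have hs0 : 0 < s := by positivity
    refine ⟨s, hs0.le, ?_⟩
    intro hmem
    have h1 : ‖L s‖ < R := by simpa using hR hmem
    have h2 : ‖s • v‖ - ‖x₀‖ ≤ ‖L s‖ := by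
      have := norm_sub_norm_le (s • v) (-x₀)
      simp only [norm_neg, sub_neg_eq_add] at this
      simpa [hLdef, add_comm] using this
    have hn : ‖s • v‖ = s * ‖v‖ := by
      rw [norm_smul, Real.norm_eq_abs, abs_of_pos hs0]
    have : (|R| + ‖x₀‖) / ‖v‖ * ‖v‖ = |R| + ‖x₀‖ := div_mul_cancel₀ _ hv'.ne'
    have hRa : R ≤ |R| := le_abs_self R
    have hsv : s * ‖v‖ = |R| + ‖x₀‖ + ‖v‖ := by rw [hsdef, add_mul, this, one_mul]
    linarith
  have hA_bdd : BddBelow A := ⟨0, fun t ht => ht.1⟩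
  set T := sInf A with hTdef
  have hTA : T ∈ A := hA_closed.csInf_mem hA_ne hA_bdd
  have hT_in : ∀ t, 0 ≤ t → t < T → L t ∈ D := by
    intro t h1 h2
    by_contra h
    exact absurd (csInf_le hA_bdd ⟨h1, h⟩) (not_le.2 h2)
  have hT_pos : 0 < T := by
    have h0 : (0:ℝ) ∈ L ⁻¹' D := by simp [hLdef, hx₀]
    obtain ⟨δ, hδ, hball⟩ := Metric.isOpen_iff.1 (hD_open.preimage hLcont) 0 h0
    have : δ ≤ T := by
      refine le_csInf hA_ne fun t ht => ?_
      by_contra hlt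
      push_neg at hlt
      exact ht.2 (hball (by simp [Real.dist_eq, abs_of_nonneg ht.1, hlt]))
    linarith
  -- monotonicity along the ray
  have hmono : ∀ t, 0 ≤ t → t < T → V (L t) ≤ V x₀ := by
    intro t ht htT
    have hder : ∀ s ∈ Set.Icc (0:ℝ) t, HasDerivAt (V ∘ L) ⟪gradV (L s), v⟫ s := by
      intro s hs
      have hsD : L s ∈ D := hT_in s hs.1 (lt_of_le_of_lt hs.2 htT)
      have := ((hV _ hsD).hasFDerivAt.comp_hasDerivAt s (hLderiv s))
      simpa [InnerProductSpace.toDual_apply_apply] using this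
    have hanti : AntitoneOn (V ∘ L) (Set.Icc 0 t) := by
      apply antitoneOn_of_deriv_nonpos (convex_Icc 0 t)
      · exact fun s hs => (hder s hs).continuousAt.continuousWithinAt
      · intro s hs
        rw [interior_Icc] at hs
        exact (hder s ⟨hs.1.le, hs.2.le⟩).differentiableAt.differentiableWithinAt
      · intro s hs
        rw [interior_Icc] at hs
        rw [(hder s ⟨hs.1.le, hs.2.le⟩).deriv]
        exact hcon _ (hT_in s hs.1.le (hs.2.trans htT))
    have := hanti (Set.left_mem_Icc.2 ht) (Set.right_mem_Icc.2 ht) ht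
    simpa [hLdef] using this
  -- blow-up contradiction
  obtain ⟨K, hKD, hKc, hKM⟩ := hblow (V x₀ + 1)
  have hpK : L T ∉ K := fun h => hTA.2 (hKD h)
  obtain ⟨ε, hε, hball⟩ := Metric.isOpen_iff.1 (hKc.isClosed.isOpen_compl.preimage hLcont) T hpK
  set t := T - min (ε / 2) (T / 2) with htdef
  have ht0 : 0 ≤ t := by
    have := min_le_right (ε/2) (T/2); simp only [htdef]; linarith
  have htT : t < T := by
    have h1 : 0 < min (ε/2) (T/2) := lt_min (by linarith) (by linarith)
    simp only [htdef]; linarith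
  have htK : L t ∉ K := by
    apply hball
    have := min_le_left (ε/2) (T/2)
    have h1 : 0 < min (ε/2) (T/2) := lt_min (by linarith) (by linarith)
    have h2 : T - (ε / 2 ⊓ T / 2) - T = -(ε / 2 ⊓ T / 2) := by ring
    simp only [Metric.mem_ball, Real.dist_eq, htdef, h2, abs_neg, abs_of_pos h1]
    linarith
  have htD : L t ∈ D := hT_in t ht0 htT
  have := hKM (L t) ⟨htD, htK⟩
  have := hmono t ht0 htT
  linarith
end

section
/- Let d ≥ 1, let D ⊆ ℝ^d be a nonempty bounded open set, and let V : D → ℝ be differentiable on D such that V(x) → +∞ as x approaches the boundary of D. Then the set of gradients {∇V(x) : x ∈ D} spans all of ℝ^d as a linear subspace. -/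
open Set Metric

/-- If `V : D → ℝ` is differentiable on a nonempty bounded open set `D ⊆ ℝ^d` and
`V(x) → +∞` as `x` approaches the boundary of `D`, then the gradients
`{∇V(x) : x ∈ D}` span all of `ℝ^d`. -/
theorem stmt_2 (d : ℕ) (hd : 1 ≤ d)
    (D : Set (EuclideanSpace ℝ (Fin d)))
    (hD_ne : D.Nonempty) (hD_bdd : Bornology.IsBounded D) (hD_open : IsOpen D)
    (V : EuclideanSpace ℝ (Fin d) → ℝ)
    (gradV : EuclideanSpace ℝ (Fin d) → EuclideanSpace ℝ (Fin d))
    (hV : ∀ x ∈ D, HasGradientAt V (gradV x) x)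
    (hblow : ∀ M : ℝ, ∃ K : Set (EuclideanSpace ℝ (Fin d)),
      K ⊆ D ∧ IsCompact K ∧ ∀ x ∈ D \ K, M ≤ V x) :
    Submodule.span ℝ (gradV '' D) = ⊤ := by
  by_contra hspan
  have hbot : (Submodule.span ℝ (gradV '' D))ᗮ ≠ ⊥ := fun h =>
    hspan (Submodule.orthogonal_eq_bot_iff.mp h)
  obtain ⟨u, hu_mem, hu_ne⟩ := Submodule.exists_mem_ne_zero_of_ne_bot hbot
  have horth : ∀ x ∈ D, inner ℝ (gradV x) u = (0:ℝ) := fun x hx =>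
    (Submodule.mem_orthogonal _ u).mp hu_mem _ (Submodule.subset_span ⟨x, hx, rfl⟩)
  obtain ⟨x₀, hx₀⟩ := hD_ne
  set g : ℝ → EuclideanSpace ℝ (Fin d) := fun t => x₀ + t • u with hgdef
  have hg0 : g 0 = x₀ := by simp [hgdef]
  have hg_deriv : ∀ t : ℝ, HasDerivAt g u t := fun t => by
    simpa [hgdef] using ((hasDerivAt_id t).smul_const u).const_add x₀
  have hg_cont : Continuous g := by continuity
  have hVg : ∀ t : ℝ, g t ∈ D → HasDerivAt (fun s => V (g s)) 0 t := by
    intro t ht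
    have h1 := (hV (g t) ht).hasFDerivAt.comp_hasDerivAt t (hg_deriv t)
    simp [horth (g t) ht] at h1; exact h1
  have hconst : ∀ t : ℝ, 0 ≤ t → (∀ s ∈ Icc (0:ℝ) t, g s ∈ D) → V (g t) = V x₀ := by
    intro t ht hseg
    have := constant_of_has_deriv_right_zero
      (f := fun s => V (g s)) (a := 0) (b := t)
      (fun s hs => ((hVg s (hseg s hs)).continuousAt).continuousWithinAt)
      (fun s hs => ((hVg s (hseg s (Ico_subset_Icc_self hs))).hasDerivWithinAt))
      t (by simp [ht])
    simpa [hg0] using this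
  obtain ⟨K, hKD, hKc, hKV⟩ := hblow (V x₀ + 1)
  set A : Set ℝ := {t : ℝ | 0 ≤ t ∧ ∀ s ∈ Icc (0:ℝ) t, g s ∈ D} with hAdef
  have h0A : (0:ℝ) ∈ A := ⟨le_refl 0, fun s hs => by
    have : s = 0 := le_antisymm hs.2 hs.1
    simp [this, hg0, hx₀]⟩
  obtain ⟨R, hR⟩ := hD_bdd.subset_closedBall 0
  have hu_norm : 0 < ‖u‖ := norm_pos_iff.mpr hu_ne
  have hAbdd : BddAbove A := by
    refine ⟨(R + ‖x₀‖) / ‖u‖, fun t ht => ?_⟩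
    have hgt : g t ∈ D := ht.2 t ⟨ht.1, le_refl t⟩
    have h1 : ‖g t‖ ≤ R := by simpa using hR hgt
    have h2 : ‖t • u‖ ≤ ‖g t‖ + ‖x₀‖ := by
      have : t • u = g t - x₀ := by simp [hgdef]
      rw [this]
      exact norm_sub_le _ _
    have h3 : t * ‖u‖ ≤ R + ‖x₀‖ := by
      calc t * ‖u‖ ≤ |t| * ‖u‖ := by
            exact mul_le_mul_of_nonneg_right (le_abs_self t) (norm_nonneg u)
        _ = ‖t • u‖ := (norm_smul t u).symm
        _ ≤ R + ‖x₀‖ := by linarith [h2, h1]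
    exact (le_div_iff₀ hu_norm).mpr h3
  set b : ℝ := sSup A with hbdef
  have hb0 : 0 ≤ b := le_csSup hAbdd h0A
  have hAdown : ∀ t ∈ A, ∀ s, 0 ≤ s → s ≤ t → s ∈ A := by
    intro t ht s hs0 hst
    exact ⟨hs0, fun r hr => ht.2 r ⟨hr.1, hr.2.trans hst⟩⟩
  have hAK : ∀ t ∈ A, g t ∈ K := by
    intro t ht
    have hgt : g t ∈ D := ht.2 t ⟨ht.1, le_refl t⟩
    by_contra hnot
    have := hKV (g t) ⟨hgt, hnot⟩
    rw [hconst t ht.1 ht.2] at this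
    linarith
  have hbK : g b ∈ K := by
    have hbcl : b ∈ closure A := csSup_mem_closure ⟨0, h0A⟩ hAbdd
    have : g b ∈ closure (g '' A) := by
      have h1 : g b ∈ g '' closure A := ⟨b, hbcl, rfl⟩
      exact (image_closure_subset_closure_image hg_cont) h1
    refine hKc.isClosed.closure_subset_iff.mpr ?_ this
    rintro _ ⟨t, ht, rfl⟩
    exact hAK t ht
  have hbD : g b ∈ D := hKD hbK
  obtain ⟨ε, hε, hball⟩ := Metric.isOpen_iff.mp hD_open (g b) hbD
  set δ : ℝ := ε / (2 * (‖u‖ + 1)) with hδdef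
  have hδ : 0 < δ := by positivity
  have hmem : b + δ ∈ A := by
    refine ⟨by linarith, fun s hs => ?_⟩
    rcases lt_or_ge s b with hsb | hsb
    · obtain ⟨t, htA, hst⟩ := exists_lt_of_lt_csSup ⟨0, h0A⟩ hsb
      exact (hAdown t htA s hs.1 hst.le).2 s ⟨hs.1, le_refl s⟩
    · apply hball
      have hsub : g s - g b = (s - b) • u := by
        simp [hgdef, sub_smul]
      have hdist : dist (g s) (g b) = |s - b| * ‖u‖ := by
        rw [dist_eq_norm, hsub, norm_smul, Real.norm_eq_abs]
      rw [mem_ball, hdist]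
      have h1 : |s - b| ≤ δ := by
        rw [abs_le]
        constructor <;> [linarith; linarith [hs.2]]
      calc |s - b| * ‖u‖ ≤ δ * (‖u‖ + 1) := by
            apply mul_le_mul h1 (by linarith) (norm_nonneg u) hδ.le
        _ = ε / 2 := by
            rw [hδdef]; field_simp
        _ < ε := by linarith
  have := le_csSup hAbdd hmem
  linarith
end

section
/- Let d ≥ 1, let D ⊆ ℝ^d be a nonempty bounded open set, and let V : D → ℝ be differentiable on D such that V(x) → +∞ as x approaches the boundary of D. Then there exist finitely many points x₁, …, x_ℓ ∈ D such that the positive cone generated by ∇V(x₁), …, ∇V(x_ℓ) is all of ℝ^d; that is, for every y ∈ ℝ^d there exist nonnegative reals α₁, …, α_ℓ with y = Σ_{i=1}^{ℓ} α_i ∇V(x_i). -/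
open RealInnerProductSpace InnerProductSpace

/-- Every vector `y` is attained as a gradient of `V`: minimize `V - ⟪y, ·⟫` over `D`. -/
lemma key_grad (d : ℕ) (D : Set (EuclideanSpace ℝ (Fin d)))
    (hD_ne : D.Nonempty) (hD_bdd : Bornology.IsBounded D) (hD_open : IsOpen D)
    (V : EuclideanSpace ℝ (Fin d) → ℝ)
    (gradV : EuclideanSpace ℝ (Fin d) → EuclideanSpace ℝ (Fin d))
    (hV : ∀ x ∈ D, HasGradientAt V (gradV x) x)
    (hblow : ∀ M : ℝ, ∃ K : Set (EuclideanSpace ℝ (Fin d)),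
      K ⊆ D ∧ IsCompact K ∧ ∀ x ∈ D \ K, M ≤ V x)
    (y : EuclideanSpace ℝ (Fin d)) : ∃ x ∈ D, gradV x = y := by
  obtain ⟨x₀, hx₀⟩ := hD_ne
  obtain ⟨R, hR⟩ := hD_bdd.subset_closedBall 0
  set W : EuclideanSpace ℝ (Fin d) → ℝ := fun x => V x - ⟪y, x⟫ with hW
  have hWd : ∀ x ∈ D, HasFDerivAt W (toDual ℝ _ (gradV x - y)) x := by
    intro x hx
    have h1 : HasFDerivAt V (toDual ℝ _ (gradV x)) x := (hV x hx).hasFDerivAt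
    have h2 : HasFDerivAt (fun x => ⟪y, x⟫) (innerSL ℝ y) x := (innerSL ℝ y).hasFDerivAt
    have := h1.sub h2
    refine this.congr_fderiv ?_
    ext v
    simp [toDual_apply_apply, inner_sub_left]
  have hbound : ∀ x ∈ D, |⟪y, x⟫| ≤ ‖y‖ * R := by
    intro x hx
    calc |⟪y, x⟫| ≤ ‖y‖ * ‖x‖ := abs_real_inner_le_norm y x
    _ ≤ ‖y‖ * R := by
        have := hR hx
        simp only [Metric.mem_closedBall, dist_zero_right] at this
        exact mul_le_mul_of_nonneg_left this (norm_nonneg y)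
  obtain ⟨K, hKD, hKc, hKM⟩ := hblow (W x₀ + ‖y‖ * R + 1)
  set K' := insert x₀ K with hK'
  have hK'D : K' ⊆ D := Set.insert_subset hx₀ hKD
  have hK'c : IsCompact K' := hKc.insert x₀
  have hWc : ContinuousOn W K' := fun x hx =>
    ((hWd x (hK'D hx)).continuousAt).continuousWithinAt
  obtain ⟨z, hzK', hzmin⟩ := hK'c.exists_isMinOn ⟨x₀, Set.mem_insert _ _⟩ hWc
  have hzD : z ∈ D := hK'D hzK'
  have hglobal : ∀ x ∈ D, W z ≤ W x := by
    intro x hx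
    by_cases hxK : x ∈ K'
    · exact hzmin hxK
    · have hxK2 : x ∈ D \ K := ⟨hx, fun h => hxK (Set.mem_insert_of_mem _ h)⟩
      have hVx := hKM x hxK2
      have h1 : W x₀ + 1 ≤ W x := by
        have := hbound x hx
        simp only [hW] at hVx ⊢
        linarith [abs_le.mp (hbound x hx)]
      have h2 : W z ≤ W x₀ := hzmin (Set.mem_insert _ _)
      linarith
  have hlocal : IsLocalMin W z := by
    have : IsMinOn W D z := fun x hx => hglobal x hx
    exact this.isLocalMin (hD_open.mem_nhds hzD)
  have := hlocal.hasFDerivAt_eq_zero (hWd z hzD)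
  have h0 : gradV z - y = 0 := by
    have := congrArg (toDual ℝ (EuclideanSpace ℝ (Fin d))).symm this
    simpa using this
  exact ⟨z, hzD, sub_eq_zero.mp h0⟩

/-- If `V : D → ℝ` is differentiable on a nonempty bounded open set `D ⊆ ℝ^d` and
`V(x) → +∞` as `x` approaches the boundary of `D`, then there exist finitely many
points `x₁, …, x_ℓ ∈ D` such that the positive cone generated by the gradients
`∇V(x₁), …, ∇V(x_ℓ)` is all of `ℝ^d`. -/
theorem stmt_3 (d : ℕ) (hd : 1 ≤ d)
    (D : Set (EuclideanSpace ℝ (Fin d)))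
    (hD_ne : D.Nonempty) (hD_bdd : Bornology.IsBounded D) (hD_open : IsOpen D)
    (V : EuclideanSpace ℝ (Fin d) → ℝ)
    (gradV : EuclideanSpace ℝ (Fin d) → EuclideanSpace ℝ (Fin d))
    (hV : ∀ x ∈ D, HasGradientAt V (gradV x) x)
    (hblow : ∀ M : ℝ, ∃ K : Set (EuclideanSpace ℝ (Fin d)),
      K ⊆ D ∧ IsCompact K ∧ ∀ x ∈ D \ K, M ≤ V x) :
    ∃ (ℓ : ℕ) (x : Fin ℓ → EuclideanSpace ℝ (Fin d)),
      (∀ i, x i ∈ D) ∧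
      ∀ y : EuclideanSpace ℝ (Fin d), ∃ α : Fin ℓ → ℝ,
        (∀ i, 0 ≤ α i) ∧ y = ∑ i, α i • gradV (x i) := by
  choose F hFD hFgrad using key_grad d D hD_ne hD_bdd hD_open V gradV hV hblow
  set e : Fin d → EuclideanSpace ℝ (Fin d) := fun j => EuclideanSpace.single j 1 with he
  refine ⟨d + d,
    fun i => Sum.elim (fun j => F (e j)) (fun j => F (-(e j))) (finSumFinEquiv.symm i), ?_, ?_⟩
  · intro i
    cases h : finSumFinEquiv.symm i <;> simp [h, hFD]
  · intro y
    refine ⟨fun i => Sum.elim (fun j => max (y j) 0) (fun j => max (-(y j)) 0)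
      (finSumFinEquiv.symm i), ?_, ?_⟩
    · intro i
      cases h : finSumFinEquiv.symm i <;> simp [h, le_max_right]
    · rw [← finSumFinEquiv.sum_comp]
      simp only [Equiv.symm_apply_apply]
      rw [Fintype.sum_sum_type]
      simp only [Sum.elim_inl, Sum.elim_inr, hFgrad]
      have h1 : ∀ j, max (y j) 0 • e j + max (-(y j)) 0 • (-(e j)) = y j • e j := by
        intro j
        rw [smul_neg, ← sub_eq_add_neg, ← sub_smul, max_zero_sub_max_neg_zero_eq_self]
      rw [← Finset.sum_add_distrib]
      simp_rw [h1]
      have := (EuclideanSpace.basisFun (Fin d) ℝ).sum_repr y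
      simp only [EuclideanSpace.basisFun_repr, EuclideanSpace.basisFun_apply] at this
      exact this.symm
end

section
/- Let d ≥ 1, let D ⊆ ℝ^d be a nonempty bounded open set, and let V : D → ℝ be differentiable on D such that V(x) → +∞ as x approaches the boundary of D. Let Γ be an invertible real d×d matrix and let ρ₂ : ℝ^d → ℝ be differentiable and positive everywhere. Suppose that for every x ∈ D and y ∈ ℝ^d one has ρ₂(y)·⟨∇V(x), y⟩ + (1/2)·⟨Γ ∇V(x), ∇ρ₂(y)⟩ = 0. Then Γ is symmetric and ρ₂(y) = ρ₂(0)·exp(−⟨Γ^{-1} y, y⟩) for every y ∈ ℝ^d. -/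
open scoped RealInnerProductSpace

section helpers

lemma ode1 (f : ℝ → ℝ) (α β : ℝ)
    (hf : ∀ t, HasDerivAt f (-(2*α + 2*β*t) * f t) t) :
    ∀ t, f t = f 0 * Real.exp (-(2*α*t + β*t^2)) := by
  have key : ∀ t, f t * Real.exp (2*α*t + β*t^2) = f 0 := by
    have hg : ∀ t : ℝ, HasDerivAt (fun t => f t * Real.exp (2*α*t + β*t^2)) 0 t := by
      intro t
      have h1 : HasDerivAt (fun t : ℝ => 2*α*t + β*t^2) (2*α + 2*β*t) t := by
        have := ((hasDerivAt_id t).const_mul (2*α)).add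
          (((hasDerivAt_pow 2 t)).const_mul β)
        convert this using 1 <;> first | rfl | ring
      have h2 := h1.exp
      have := (hf t).mul h2
      convert this using 1 <;> first | rfl | ring
    have hconst := is_const_of_deriv_eq_zero (f := fun t => f t * Real.exp (2*α*t + β*t^2))
      (fun t => (hg t).differentiableAt) (fun t => (hg t).deriv)
    intro t
    simpa using hconst t 0
  intro t
  have h := key t
  rw [Real.exp_neg]
  rw [eq_comm, mul_inv_eq_iff_eq_mul₀ (Real.exp_pos _).ne', eq_comm, mul_comm (f t)]
  linarith [h]

lemma span_grad {d : ℕ}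
    (D : Set (EuclideanSpace ℝ (Fin d)))
    (hD_ne : D.Nonempty) (hD_bdd : Bornology.IsBounded D) (hD_open : IsOpen D)
    (V : EuclideanSpace ℝ (Fin d) → ℝ)
    (gradV : EuclideanSpace ℝ (Fin d) → EuclideanSpace ℝ (Fin d))
    (hV : ∀ x ∈ D, HasGradientAt V (gradV x) x)
    (hblow : ∀ M : ℝ, ∃ K : Set (EuclideanSpace ℝ (Fin d)),
      K ⊆ D ∧ IsCompact K ∧ ∀ x ∈ D \ K, M ≤ V x)
    (w : EuclideanSpace ℝ (Fin d))
    (hw : ∀ x ∈ D, ⟪gradV x, w⟫ = 0) : w = 0 := by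
  by_contra hw0
  have hwn : 0 < ‖w‖ := norm_pos_iff.mpr hw0
  obtain ⟨x₀, hx₀⟩ := hD_ne
  set L : ℝ → EuclideanSpace ℝ (Fin d) := fun t => x₀ + t • w with hL
  have hLderiv : ∀ t : ℝ, HasDerivAt L w t := by
    intro t
    simpa [hL] using (((hasDerivAt_id t).smul_const w).const_add x₀)
  have hLcont : Continuous L := by
    continuity
  set T : Set ℝ := {t : ℝ | 0 ≤ t ∧ ∀ s ∈ Set.Icc (0:ℝ) t, L s ∈ D} with hT
  have h0T : (0:ℝ) ∈ T := by
    refine ⟨le_refl _, ?_⟩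
    intro s hs
    have : s = 0 := le_antisymm hs.2 hs.1
    simpa [this, hL] using hx₀
  obtain ⟨R, hR⟩ := hD_bdd.exists_norm_le
  have hbdd : BddAbove T := by
    refine ⟨(R + ‖x₀‖) / ‖w‖, ?_⟩
    intro t ht
    have hLt : L t ∈ D := ht.2 t ⟨ht.1, le_refl _⟩
    have h1 : ‖L t‖ ≤ R := hR _ hLt
    have h2 : t * ‖w‖ - ‖x₀‖ ≤ ‖L t‖ := by
      have := norm_add_le (-x₀) (L t)
      have h3 : ‖t • w‖ ≤ ‖x₀‖ + ‖L t‖ := by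
        calc ‖t • w‖ = ‖-x₀ + L t‖ := by simp [hL]
        _ ≤ ‖x₀‖ + ‖L t‖ := by simpa using this
      have h4 : ‖t • w‖ = |t| * ‖w‖ := by simp [norm_smul]
      have h5 : t * ‖w‖ ≤ |t| * ‖w‖ := mul_le_mul_of_nonneg_right (le_abs_self t) (norm_nonneg _)
      linarith
    rw [le_div_iff₀ hwn]
    linarith
  set tS := sSup T with htS
  have hmem : ∀ t : ℝ, 0 ≤ t → t < tS → L t ∈ D := by
    intro t ht0 htlt
    obtain ⟨t', ht'T, htt'⟩ := exists_lt_of_lt_csSup ⟨0, h0T⟩ htlt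
    exact ht'T.2 t ⟨ht0, le_of_lt htt'⟩
  have htS0 : 0 < tS := by
    obtain ⟨ε, hε, hball⟩ := Metric.isOpen_iff.mp hD_open x₀ hx₀
    set δ := ε / (2 * ‖w‖) with hδ
    have hδpos : 0 < δ := div_pos hε (by positivity)
    have hδT : δ ∈ T := by
      refine ⟨le_of_lt hδpos, fun s hs => hball ?_⟩
      have : dist (L s) x₀ = |s| * ‖w‖ := by
        simp [hL, dist_eq_norm, norm_smul]
      rw [Metric.mem_ball, this, abs_of_nonneg hs.1]
      calc s * ‖w‖ ≤ δ * ‖w‖ := mul_le_mul_of_nonneg_right hs.2 (norm_nonneg _)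
      _ = ε / 2 := by rw [hδ]; field_simp
      _ < ε := by linarith
    exact lt_of_lt_of_le hδpos (le_csSup hbdd hδT)
  have hxs : L tS ∉ D := by
    intro hmemD
    obtain ⟨ε, hε, hball⟩ := Metric.isOpen_iff.mp hD_open _ hmemD
    set δ := ε / (2 * ‖w‖) with hδ
    have hδpos : 0 < δ := div_pos hε (by positivity)
    have : tS + δ ∈ T := by
      refine ⟨by linarith [le_of_lt htS0], fun s hs => ?_⟩
      rcases lt_or_ge s tS with h | h
      · exact hmem s hs.1 h
      · refine hball ?_
        have hdiff : L s - L tS = (s - tS) • w := by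
          simp [hL, sub_smul]
        have : dist (L s) (L tS) = |s - tS| * ‖w‖ := by
          rw [dist_eq_norm, hdiff, norm_smul, Real.norm_eq_abs]
        rw [Metric.mem_ball, this, abs_of_nonneg (by linarith)]
        have h2 : s - tS ≤ δ := by linarith [hs.2]
        calc (s - tS) * ‖w‖ ≤ δ * ‖w‖ := mul_le_mul_of_nonneg_right h2 (norm_nonneg _)
        _ = ε / 2 := by rw [hδ]; field_simp
        _ < ε := by linarith
    have := le_csSup hbdd this
    linarith
  -- V constant on [0, tS)
  have hconst : ∀ t : ℝ, 0 ≤ t → t < tS → V (L t) = V x₀ := by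
    intro t ht0 htlt
    have hder : ∀ s ∈ Set.Icc (0:ℝ) t, HasDerivAt (fun u => V (L u)) 0 s := by
      intro s hs
      have hsD : L s ∈ D := hmem s hs.1 (lt_of_le_of_lt hs.2 htlt)
      have := ((hV _ hsD).hasFDerivAt.comp_hasDerivAt s (hLderiv s))
      simpa [Function.comp_def, InnerProductSpace.toDual_apply_apply, hw _ hsD] using this
    have hcont : ContinuousOn (fun u => V (L u)) (Set.Icc 0 t) :=
      fun s hs => ((hder s hs).continuousAt).continuousWithinAt
    have := constant_of_has_deriv_right_zero hcont
      (fun s hs => ((hder s ⟨hs.1, le_of_lt hs.2⟩).hasDerivWithinAt)) t ⟨ht0, le_refl _⟩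
    simpa [hL] using this
  obtain ⟨K, hKD, hKcomp, hKV⟩ := hblow (V x₀ + 1)
  have hxsK : L tS ∉ K := fun h => hxs (hKD h)
  have hopen : IsOpen (L ⁻¹' Kᶜ) := (hKcomp.isClosed.isOpen_compl).preimage hLcont
  obtain ⟨η, hη, hballη⟩ := Metric.isOpen_iff.mp hopen tS hxsK
  set t := max 0 (tS - η/2) with ht
  have ht0 : 0 ≤ t := le_max_left _ _
  have htlt : t < tS := by
    rw [ht, max_lt_iff]
    constructor <;> linarith
  have htball : t ∈ Metric.ball tS η := by
    rw [Metric.mem_ball, Real.dist_eq, abs_sub_lt_iff]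
    rcases le_or_gt 0 (tS - η/2) with h | h
    · rw [ht, max_eq_right h]; constructor <;> linarith
    · rw [ht, max_eq_left (le_of_lt h)]; constructor <;> linarith
  have hnotK : L t ∉ K := hballη htball
  have hVge := hKV (L t) ⟨hmem t ht0 htlt, hnotK⟩
  rw [hconst t ht0 htlt] at hVge
  linarith
end helpers

/-- Let `V` be differentiable on a nonempty bounded open `D ⊆ ℝ^d` blowing up at the
boundary, `Γ` an invertible matrix, and `ρ₂ > 0` differentiable, satisfying
`ρ₂(y)⟨∇V(x), y⟩ + (1/2)⟨Γ∇V(x), ∇ρ₂(y)⟩ = 0` for all `x ∈ D`, `y ∈ ℝ^d`.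
Then `Γ` is symmetric and `ρ₂(y) = ρ₂(0)·exp(−⟨Γ⁻¹y, y⟩)`. -/
theorem stmt_6 (d : ℕ) (hd : 1 ≤ d)
    (D : Set (EuclideanSpace ℝ (Fin d)))
    (hD_ne : D.Nonempty) (hD_bdd : Bornology.IsBounded D) (hD_open : IsOpen D)
    (V : EuclideanSpace ℝ (Fin d) → ℝ)
    (gradV : EuclideanSpace ℝ (Fin d) → EuclideanSpace ℝ (Fin d))
    (hV : ∀ x ∈ D, HasGradientAt V (gradV x) x)
    (hblow : ∀ M : ℝ, ∃ K : Set (EuclideanSpace ℝ (Fin d)),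
      K ⊆ D ∧ IsCompact K ∧ ∀ x ∈ D \ K, M ≤ V x)
    (Γ : Matrix (Fin d) (Fin d) ℝ) (hΓ_inv : IsUnit Γ.det)
    (ρ₂ : EuclideanSpace ℝ (Fin d) → ℝ)
    (gρ : EuclideanSpace ℝ (Fin d) → EuclideanSpace ℝ (Fin d))
    (hρ_pos : ∀ y, 0 < ρ₂ y)
    (hρ_grad : ∀ y, HasGradientAt ρ₂ (gρ y) y)
    (heq : ∀ x ∈ D, ∀ y : EuclideanSpace ℝ (Fin d),
      ρ₂ y * ⟪gradV x, y⟫ +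
        (1/2 : ℝ) * ⟪(EuclideanSpace.equiv (Fin d) ℝ).symm
          (Γ.mulVec (fun i => gradV x i)), gρ y⟫ = 0) :
    Γ.transpose = Γ ∧
      ∀ y : EuclideanSpace ℝ (Fin d),
        ρ₂ y = ρ₂ 0 *
          Real.exp (-⟪(EuclideanSpace.equiv (Fin d) ℝ).symm (Γ⁻¹.mulVec (fun i => y i)), y⟫) := by
  classical
  have hΓt_inv : IsUnit Γ.transpose.det := by rwa [Matrix.det_transpose]
  -- Step 1: stationarity vector identity
  have hw0 : ∀ y : EuclideanSpace ℝ (Fin d),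
      ρ₂ y • y + (1/2 : ℝ) • ((EuclideanSpace.equiv (Fin d) ℝ).symm
        (Γ.transpose.mulVec (fun i => gρ y i))) = 0 := by
    intro y
    apply span_grad D hD_ne hD_bdd hD_open V gradV hV hblow
    intro x hx
    have h := heq x hx y
    rw [inner_add_right, real_inner_smul_right, real_inner_smul_right]
    have hdot : ⟪gradV x, (EuclideanSpace.equiv (Fin d) ℝ).symm
        (Γ.transpose.mulVec (fun i => gρ y i))⟫
        = ⟪(EuclideanSpace.equiv (Fin d) ℝ).symm (Γ.mulVec (fun i => gradV x i)), gρ y⟫ := by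
      have h1 : ⟪gradV x, (EuclideanSpace.equiv (Fin d) ℝ).symm
          (Γ.transpose.mulVec (fun i => gρ y i))⟫
          = dotProduct (fun i => gradV x i) (Γ.transpose.mulVec (fun i => gρ y i)) := by
        simp [PiLp.inner_apply, RCLike.inner_apply, dotProduct]
        exact Finset.sum_congr rfl fun _ _ => mul_comm _ _
      have h2 : ⟪(EuclideanSpace.equiv (Fin d) ℝ).symm (Γ.mulVec (fun i => gradV x i)), gρ y⟫
          = dotProduct (Γ.mulVec (fun i => gradV x i)) (fun i => gρ y i) := by
        simp [PiLp.inner_apply, RCLike.inner_apply, dotProduct]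
        exact Finset.sum_congr rfl fun _ _ => mul_comm _ _
      rw [h1, h2, Matrix.dotProduct_mulVec, Matrix.vecMul_transpose]
    rw [hdot]
    exact h
  -- Step 2: explicit formula for gρ
  set B : Matrix (Fin d) (Fin d) ℝ := Γ.transpose⁻¹ with hBdef
  have hgρ : ∀ (y : EuclideanSpace ℝ (Fin d)) (i : Fin d),
      gρ y i = (-2 * ρ₂ y) * (B.mulVec (fun j => y j)) i := by
    intro y i
    have hΓg : Γ.transpose.mulVec (fun j => gρ y j) = fun j => (-2 * ρ₂ y) * y j := by
      funext j
      have := congrFun (congrArg (fun v => (EuclideanSpace.equiv (Fin d) ℝ) v) (hw0 y)) j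
      simp only [EuclideanSpace.equiv] at this ⊢
      have h2 : ρ₂ y * y j + (1/2 : ℝ) * (Γ.transpose.mulVec (fun i => gρ y i)) j = 0 := by
        simpa [PiLp.add_apply, PiLp.smul_apply, smul_eq_mul] using
          congrFun (congrArg (fun (v : EuclideanSpace ℝ (Fin d)) (i : Fin d) => v i) (hw0 y)) j
      linarith
    have : B.mulVec (Γ.transpose.mulVec (fun j => gρ y j)) = fun j => gρ y j := by
      rw [Matrix.mulVec_mulVec, hBdef, Matrix.nonsing_inv_mul _ hΓt_inv, Matrix.one_mulVec]
    rw [← congrFun this i, hΓg]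
    have hsm : (fun j => (-2 * ρ₂ y) * y j) = (-2 * ρ₂ y) • (fun j => y j) := by
      funext j; simp [smul_eq_mul]
    rw [hsm, Matrix.mulVec_smul]
    simp [smul_eq_mul]
  -- quadratic form
  set q : EuclideanSpace ℝ (Fin d) → EuclideanSpace ℝ (Fin d) → ℝ :=
    fun u v => dotProduct (B.mulVec (fun i => u i)) (fun i => v i) with hqdef
  have hinner : ∀ y h : EuclideanSpace ℝ (Fin d), ⟪gρ y, h⟫ = (-2 * ρ₂ y) * q y h := by
    intro y h
    simp only [PiLp.inner_apply, RCLike.inner_apply, starRingEnd_apply, star_trivial,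
      hqdef, dotProduct]
    rw [Finset.mul_sum]
    exact Finset.sum_congr rfl fun i _ => by rw [hgρ]; ring
  have hqlin : ∀ (a h : EuclideanSpace ℝ (Fin d)) (t : ℝ),
      q (a + t • h) h = q a h + t * q h h := by
    intro a h t
    have hfun : (fun i => (a + t • h) i) = (fun i => a i) + t • (fun i => h i) := by
      funext i; simp
    show dotProduct (B.mulVec fun i => (a + t • h) i) (fun i => h i) = _
    rw [hfun, Matrix.mulVec_add, Matrix.mulVec_smul, add_dotProduct,
      smul_dotProduct, smul_eq_mul]
  -- segment integration
  have hseg : ∀ a h : EuclideanSpace ℝ (Fin d),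
      ρ₂ (a + h) = ρ₂ a * Real.exp (-(2 * q a h + q h h)) := by
    intro a h
    have hder : ∀ t : ℝ, HasDerivAt (fun t : ℝ => ρ₂ (a + t • h))
        (-(2 * q a h + 2 * q h h * t) * ρ₂ (a + t • h)) t := by
      intro t
      have hL : HasDerivAt (fun t : ℝ => a + t • h) h t := by
        simpa using (((hasDerivAt_id t).smul_const h).const_add a)
      have hc := (hρ_grad (a + t • h)).hasFDerivAt.comp_hasDerivAt t hL
      convert hc using 1
      rfl
      rfl
      rfl
      rw [InnerProductSpace.toDual_apply_apply, hinner, hqlin]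
      ring
    have := ode1 _ (q a h) (q h h) hder 1
    simp only [one_smul, zero_smul, add_zero, one_pow, mul_one] at this
    exact this
  have hq0 : ∀ h : EuclideanSpace ℝ (Fin d), q 0 h = 0 := by
    intro h
    show dotProduct (B.mulVec (0 : Fin d → ℝ)) (fun i => h i) = 0
    simp
  have hρ_eq : ∀ y, ρ₂ y = ρ₂ 0 * Real.exp (-(q y y)) := by
    intro y
    have := hseg 0 y
    simpa [hq0] using this
  -- symmetry of q
  have hqsymm : ∀ y z : EuclideanSpace ℝ (Fin d), q y z = q z y := by
    intro y z
    have h1 := hseg y z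
    have h2 := hseg z y
    rw [hρ_eq y] at h1
    rw [hρ_eq z, add_comm z y] at h2
    rw [h2] at h1
    rw [mul_assoc, mul_assoc, ← Real.exp_add, ← Real.exp_add] at h1
    have h3 := mul_left_cancel₀ (hρ_pos 0).ne' h1
    have h4 := Real.exp_injective h3
    linarith
  -- B is symmetric
  have hBsymm : B.transpose = B := by
    apply Matrix.ext
    intro i j
    have hq := hqsymm (EuclideanSpace.single j (1:ℝ)) (EuclideanSpace.single i (1:ℝ))
    have hval : ∀ k l : Fin d, q (EuclideanSpace.single l (1:ℝ)) (EuclideanSpace.single k (1:ℝ)) = B k l := by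
      intro k l
      simp [hqdef, dotProduct, Matrix.mulVec, EuclideanSpace.single_apply,
        mul_ite, ite_mul, Finset.sum_ite_eq, Finset.sum_ite_eq']
    rw [Matrix.transpose_apply]
    rw [hval i j, hval j i] at hq
    exact hq.symm
  -- Γ symmetric
  have hBt : B = Γ⁻¹ := by
    rw [← hBsymm, hBdef, ← Matrix.transpose_nonsing_inv, Matrix.transpose_transpose]
  have hΓsymm : Γ.transpose = Γ := by
    have h1 : Γ.transpose⁻¹ = Γ⁻¹ := by rw [← hBdef, hBt]
    have h2 := congrArg (fun M : Matrix (Fin d) (Fin d) ℝ => M⁻¹) h1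
    simpa [Matrix.nonsing_inv_nonsing_inv _ hΓt_inv,
      Matrix.nonsing_inv_nonsing_inv _ hΓ_inv] using h2
  refine ⟨hΓsymm, ?_⟩
  intro y
  rw [hρ_eq y]
  congr 2
  rw [hqdef]
  simp only [hBt]
  simp [PiLp.inner_apply, RCLike.inner_apply, dotProduct]
  exact Finset.sum_congr rfl fun _ _ => mul_comm _ _
end

section
/- Let D ⊆ ℝ^d be an open set, let V : D → ℝ be continuously differentiable, and let Γ be a symmetric positive definite real d×d matrix. Then for every twice continuously differentiable function f : ℝ^d × ℝ^d → ℝ with compact support contained in D × ℝ^d, one has ∫_{D×ℝ^d} [ (1/2)Δ_x f(x,y) − (1/2)⟨∇V(x), ∇_x f(x,y)⟩ + ⟨y, ∇_x f(x,y)⟩ − (1/2)⟨Γ ∇V(x), ∇_y f(x,y)⟩ ] · exp(−V(x) − ⟨Γ^{-1} y, y⟩) dx dy = 0. -/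
open scoped RealInnerProductSpace
open MeasureTheory

noncomputable section StmtAux

variable {d : ℕ}

/-- integral of a directional derivative of a compactly supported C¹ function vanishes -/
theorem aux_int_fderiv_zero {n : ℕ} (u : EuclideanSpace ℝ (Fin n) → ℝ)
    (hu : ContDiff ℝ 1 u) (h'u : HasCompactSupport u) (v : EuclideanSpace ℝ (Fin n)) :
    ∫ x, fderiv ℝ u x v = 0 := by
  obtain ⟨C, hC⟩ := hu.lipschitzWith_of_hasCompactSupport h'u one_ne_zero
  have h := LipschitzWith.integral_lineDeriv_mul_eq (μ := volume)
    (LipschitzWith.const (α := EuclideanSpace ℝ (Fin n)) (1:ℝ)) hC h'u (-v)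
  simp only [lineDeriv, deriv_const, zero_mul, integral_zero, neg_neg, mul_one] at h
  rw [h]
  exact integral_congr_ae (Filter.Eventually.of_forall fun x =>
    ((hu.differentiable one_ne_zero x).lineDeriv_eq_fderiv).symm)

lemma aux_matrix_cancel (Γ : Matrix (Fin d) (Fin d) ℝ) (hsymm : Γ.transpose = Γ)
    (hdet : IsUnit Γ.det) (g z : Fin d → ℝ) :
    ∑ i, Γ.mulVec g i * Γ⁻¹.mulVec z i = ∑ j, g j * z j := by
  have h1 : (Γ⁻¹).transpose = Γ⁻¹ := by rw [Matrix.transpose_nonsing_inv, hsymm]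
  have h2 : Γ⁻¹.mulVec z = Matrix.vecMul z Γ⁻¹ := by
    rw [← Matrix.mulVec_transpose, h1]
  calc ∑ i, Γ.mulVec g i * Γ⁻¹.mulVec z i
      = dotProduct (Γ⁻¹.mulVec z) (Γ.mulVec g) := by
        rw [dotProduct]; exact Finset.sum_congr rfl fun i _ => mul_comm _ _
    _ = dotProduct z ((Γ⁻¹ * Γ).mulVec g) := by
        rw [h2, ← Matrix.dotProduct_mulVec, Matrix.mulVec_mulVec]
    _ = ∑ j, g j * z j := by
        rw [Matrix.nonsing_inv_mul Γ hdet, Matrix.one_mulVec, dotProduct]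
        exact Finset.sum_congr rfl fun i _ => mul_comm _ _

/-- the i-th basis vector -/
def ebase (d : ℕ) (i : Fin d) : EuclideanSpace ℝ (Fin d) := EuclideanSpace.single i 1

/-- quadratic form associated to a matrix -/
def Qf (d : ℕ) (M : Matrix (Fin d) (Fin d) ℝ) : EuclideanSpace ℝ (Fin d) → ℝ :=
  fun z => ∑ j, M.mulVec (fun k => z k) j * z j

lemma aux_contDiff_Q (M : Matrix (Fin d) (Fin d) ℝ) : ContDiff ℝ 2 (Qf d M) := by
  have h : ∀ k : Fin d, ContDiff ℝ 2 (fun z : EuclideanSpace ℝ (Fin d) => z k) := fun k =>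
    (EuclideanSpace.proj (𝕜 := ℝ) k).contDiff
  refine ContDiff.sum fun j _ => ContDiff.mul ?_ (h j)
  have : (fun z : EuclideanSpace ℝ (Fin d) => M.mulVec (fun k => z k) j)
      = fun z : EuclideanSpace ℝ (Fin d) => ∑ k, M j k * z k := by
    funext z; simp [Matrix.mulVec, dotProduct]
  rw [this]
  exact ContDiff.sum fun k _ => (h k).const_smul (M j k)

lemma aux_hasFDerivAt_Q (M : Matrix (Fin d) (Fin d) ℝ) (hM : M.transpose = M)
    (y : EuclideanSpace ℝ (Fin d)) :
    ∃ L : EuclideanSpace ℝ (Fin d) →L[ℝ] ℝ,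
      HasFDerivAt (Qf d M) L y ∧
      ∀ i, L (ebase d i) = 2 * M.mulVec (fun k => y k) i := by
  classical
  set pr : Fin d → (EuclideanSpace ℝ (Fin d) →L[ℝ] ℝ) := fun k => EuclideanSpace.proj k with hpr
  set Mj : Fin d → (EuclideanSpace ℝ (Fin d) →L[ℝ] ℝ) := fun j => ∑ k, M j k • pr k with hMj
  have hMj_apply : ∀ j (z : EuclideanSpace ℝ (Fin d)), Mj j z = M.mulVec (fun k => z k) j := by
    intro j z
    simp [hMj, Matrix.mulVec, dotProduct, hpr]
  refine ⟨∑ j, (Mj j y • pr j + y j • Mj j), ?_, ?_⟩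
  · have : HasFDerivAt (fun z : EuclideanSpace ℝ (Fin d) => ∑ j, Mj j z * pr j z)
        (∑ j, (Mj j y • pr j + y j • Mj j)) y := by
      apply HasFDerivAt.fun_sum
      intro j _
      have h1 : HasFDerivAt (fun z : EuclideanSpace ℝ (Fin d) => Mj j z) (Mj j) y :=
        (Mj j).hasFDerivAt
      have h2 : HasFDerivAt (fun z : EuclideanSpace ℝ (Fin d) => pr j z) (pr j) y :=
        (pr j).hasFDerivAt
      have := h1.mul h2
      exact this
    refine this.congr_of_eventuallyEq (Filter.Eventually.of_forall fun z => ?_)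
    exact Finset.sum_congr rfl fun j _ => by rw [hMj_apply]; rfl
  · intro i
    have hpr_single : ∀ j, pr j (ebase d i) = if i = j then (1:ℝ) else 0 := by
      intro j; simp [hpr, ebase, EuclideanSpace.single_apply, eq_comm]
    simp only [ContinuousLinearMap.sum_apply, ContinuousLinearMap.add_apply,
      ContinuousLinearMap.smul_apply, smul_eq_mul]
    have : ∀ j, Mj j y * pr j (ebase d i) + y j * Mj j (ebase d i)
        = (if i = j then M.mulVec (fun k => y k) j else 0) + M j i * y j := by
      intro j
      rw [hpr_single, hMj_apply]
      congr 1
      · split <;> simp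
      · have : Mj j (ebase d i) = M j i := by
          simp only [hMj, ContinuousLinearMap.sum_apply, ContinuousLinearMap.smul_apply,
            smul_eq_mul, hpr_single]
          rw [Finset.sum_eq_single i]
          · simp
          · intro k _ hk; simp [if_neg (Ne.symm hk), hk]
          · intro h; exact absurd (Finset.mem_univ i) h
        rw [this]; ring
    rw [Finset.sum_congr rfl fun j _ => this j, Finset.sum_add_distrib,
      Finset.sum_ite_eq Finset.univ i (fun j => M.mulVec (fun k => y k) j)]
    simp only [Finset.mem_univ, if_true]
    have : ∑ j, M j i * y j = M.mulVec (fun k => y k) i := by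
      rw [Matrix.mulVec, dotProduct]
      refine Finset.sum_congr rfl fun j _ => ?_
      have h : M j i = M i j := by nth_rewrite 1 [← hM]; rfl
      rw [h]
    rw [this]; ring

variable (d) in
/-- partial x-derivative coefficient functions -/
def Bfn (f : EuclideanSpace ℝ (Fin d) × EuclideanSpace ℝ (Fin d) → ℝ) (i : Fin d) :
    EuclideanSpace ℝ (Fin d) × EuclideanSpace ℝ (Fin d) → ℝ :=
  fun p => fderiv ℝ f p (ebase d i, 0)

variable (d) in
def Cfn (f : EuclideanSpace ℝ (Fin d) × EuclideanSpace ℝ (Fin d) → ℝ) (i : Fin d) :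
    EuclideanSpace ℝ (Fin d) × EuclideanSpace ℝ (Fin d) → ℝ :=
  fun p => fderiv ℝ f p (0, ebase d i)

variable (d) in
def DBfn (f : EuclideanSpace ℝ (Fin d) × EuclideanSpace ℝ (Fin d) → ℝ) (i : Fin d) :
    EuclideanSpace ℝ (Fin d) × EuclideanSpace ℝ (Fin d) → ℝ :=
  fun p => fderiv ℝ (Bfn d f i) p (ebase d i, 0)


section StmtAux2

open ContinuousLinearMap

variable {d : ℕ}
variable {f : EuclideanSpace ℝ (Fin d) × EuclideanSpace ℝ (Fin d) → ℝ}

lemma Bfn_contDiff (hf : ContDiff ℝ 2 f) (i : Fin d) : ContDiff ℝ 1 (Bfn d f i) :=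
  (hf.fderiv_right (by norm_num)).clm_apply contDiff_const

lemma Cfn_contDiff (hf : ContDiff ℝ 2 f) (i : Fin d) : ContDiff ℝ 1 (Cfn d f i) :=
  (hf.fderiv_right (by norm_num)).clm_apply contDiff_const

lemma Bfn_eq_zero (i : Fin d) {p} (hp : p ∉ tsupport f) : Bfn d f i p = 0 := by
  rw [Bfn, fderiv_of_notMem_tsupport (𝕜 := ℝ) hp]; rfl

lemma Cfn_eq_zero (i : Fin d) {p} (hp : p ∉ tsupport f) : Cfn d f i p = 0 := by
  rw [Cfn, fderiv_of_notMem_tsupport (𝕜 := ℝ) hp]; rfl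

lemma Bfn_tsupport_subset (i : Fin d) : tsupport (Bfn d f i) ⊆ tsupport f := by
  refine closure_minimal ?_ (isClosed_tsupport f)
  intro p hp
  by_contra hcon
  exact hp (Bfn_eq_zero i hcon)

lemma DBfn_eq_zero (i : Fin d) {p} (hp : p ∉ tsupport f) : DBfn d f i p = 0 := by
  have : p ∉ tsupport (Bfn d f i) := fun h => hp (Bfn_tsupport_subset i h)
  rw [DBfn, fderiv_of_notMem_tsupport (𝕜 := ℝ) this]; rfl

/-- partial application derivative in the first variable -/
lemma hasFDerivAt_fst_slice {g : EuclideanSpace ℝ (Fin d) × EuclideanSpace ℝ (Fin d) → ℝ}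
    {x y : EuclideanSpace ℝ (Fin d)} (hg : DifferentiableAt ℝ g (x, y)) :
    HasFDerivAt (fun x' => g (x', y))
      ((fderiv ℝ g (x, y)).comp (ContinuousLinearMap.inl ℝ _ _)) x :=
  HasFDerivAt.comp x hg.hasFDerivAt (hasFDerivAt_prodMk_left x y)

lemma hasFDerivAt_snd_slice {g : EuclideanSpace ℝ (Fin d) × EuclideanSpace ℝ (Fin d) → ℝ}
    {x y : EuclideanSpace ℝ (Fin d)} (hg : DifferentiableAt ℝ g (x, y)) :
    HasFDerivAt (fun y' => g (x, y'))
      ((fderiv ℝ g (x, y)).comp (ContinuousLinearMap.inr ℝ _ _)) y :=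
  HasFDerivAt.comp y hg.hasFDerivAt (hasFDerivAt_prodMk_right x y)

lemma fderiv_fst_eq (hf : ContDiff ℝ 2 f) (x y : EuclideanSpace ℝ (Fin d)) (i : Fin d) :
    fderiv ℝ (fun x' => f (x', y)) x (ebase d i) = Bfn d f i (x, y) := by
  rw [(hasFDerivAt_fst_slice ((hf.differentiable two_ne_zero) (x, y))).fderiv]
  simp [Bfn]

lemma fderiv_snd_eq (hf : ContDiff ℝ 2 f) (x y : EuclideanSpace ℝ (Fin d)) (i : Fin d) :
    fderiv ℝ (fun y' => f (x, y')) y (ebase d i) = Cfn d f i (x, y) := by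
  rw [(hasFDerivAt_snd_slice ((hf.differentiable two_ne_zero) (x, y))).fderiv]
  simp [Cfn]

lemma fderiv2_eq (hf : ContDiff ℝ 2 f) (x y : EuclideanSpace ℝ (Fin d)) (i : Fin d) :
    fderiv ℝ (fun x' => fderiv ℝ (fun z => f (z, y)) x' (ebase d i)) x (ebase d i)
      = DBfn d f i (x, y) := by
  have h1 : (fun x' => fderiv ℝ (fun z => f (z, y)) x' (ebase d i))
      = fun x' => Bfn d f i (x', y) := funext fun x' => fderiv_fst_eq hf x' y i
  rw [h1,
    (hasFDerivAt_fst_slice (((Bfn_contDiff hf i).differentiable one_ne_zero) (x, y))).fderiv]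
  simp [DBfn]

end StmtAux2

section StmtAux3

open ContinuousLinearMap

variable {d : ℕ}

lemma slice_x (D : Set (EuclideanSpace ℝ (Fin d))) (hD_open : IsOpen D)
    (V : EuclideanSpace ℝ (Fin d) → ℝ) (hV_smooth : ContDiffOn ℝ 1 V D)
    (gradV : EuclideanSpace ℝ (Fin d) → EuclideanSpace ℝ (Fin d))
    (hgradV : ∀ x ∈ D, HasGradientAt V (gradV x) x)
    (Γ : Matrix (Fin d) (Fin d) ℝ)
    (f : EuclideanSpace ℝ (Fin d) × EuclideanSpace ℝ (Fin d) → ℝ)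
    (hf_smooth : ContDiff ℝ 2 f) (hf_cpt : HasCompactSupport f)
    (hf_supp : tsupport f ⊆ D ×ˢ (Set.univ : Set (EuclideanSpace ℝ (Fin d))))
    (y : EuclideanSpace ℝ (Fin d)) :
    ∫ x, (1/2 * (∑ i, DBfn d f i (x, y)) - 1/2 * (∑ i, gradV x i * Bfn d f i (x, y))
        + (∑ i, y i * Bfn d f i (x, y)) - f (x, y) * (∑ j, gradV x j * y j))
        * Real.exp (-V x - Qf d Γ⁻¹ y) = 0 := by
  classical
  set c : ℝ := Qf d Γ⁻¹ y with hc
  set u : Fin d → EuclideanSpace ℝ (Fin d) → ℝ := fun i x =>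
    (1/2 * Bfn d f i (x, y) + f (x, y) * y i) * Real.exp (-V x - c) with hu
  -- membership facts
  have hnotD : ∀ x : EuclideanSpace ℝ (Fin d), x ∉ D → (x, y) ∉ tsupport f := by
    intro x hx hmem
    exact hx (hf_supp hmem).1
  have huev : ∀ x : EuclideanSpace ℝ (Fin d), (x, y) ∉ tsupport f →
      ∀ᶠ x' in nhds x, (x', y) ∉ tsupport f := by
    intro x hx
    have hO : IsOpen ((fun x' : EuclideanSpace ℝ (Fin d) => (x', y)) ⁻¹' (tsupport f)ᶜ) :=
      (isOpen_compl_iff.mpr (isClosed_tsupport f)).preimage (continuous_id.prodMk continuous_const)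
    exact (hO.eventually_mem hx).mono fun x' h => h
  have hu0 : ∀ (i : Fin d) (x' : EuclideanSpace ℝ (Fin d)), (x', y) ∉ tsupport f →
      u i x' = 0 := by
    intro i x' h
    simp [hu, Bfn_eq_zero i h, image_eq_zero_of_notMem_tsupport h]
  -- C¹
  have hcd : ∀ i, ContDiff ℝ 1 (u i) := by
    intro i
    rw [contDiff_iff_contDiffAt]
    intro x
    by_cases hx : x ∈ D
    · have cB : ContDiffAt ℝ 1 (fun x' => Bfn d f i (x', y)) x :=
        ((Bfn_contDiff hf_smooth i).comp (contDiff_id.prodMk contDiff_const)).contDiffAt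
      have cf : ContDiffAt ℝ 1 (fun x' => f (x', y)) x :=
        ((hf_smooth.of_le one_le_two).comp (contDiff_id.prodMk contDiff_const)).contDiffAt
      have cV : ContDiffAt ℝ 1 V x := hV_smooth.contDiffAt (hD_open.mem_nhds hx)
      have cexp : ContDiffAt ℝ 1 (fun x' => Real.exp (-V x' - c)) x :=
        Real.contDiff_exp.contDiffAt.comp x (cV.neg.sub contDiffAt_const)
      exact ((contDiffAt_const.mul cB).add (cf.mul contDiffAt_const)).mul cexp
    · exact contDiffAt_const.congr_of_eventuallyEq
        ((huev x (hnotD x hx)).mono fun x' h => hu0 i x' h)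
  -- compact support
  have hsupp : ∀ i, HasCompactSupport (u i) := by
    intro i
    apply HasCompactSupport.intro (hf_cpt.image continuous_fst)
    intro x hx
    refine hu0 i x fun hmem => hx ?_
    exact ⟨(x, y), hmem, rfl⟩
  -- pointwise identity
  have hident : ∀ x : EuclideanSpace ℝ (Fin d),
      (1/2 * (∑ i, DBfn d f i (x, y)) - 1/2 * (∑ i, gradV x i * Bfn d f i (x, y))
        + (∑ i, y i * Bfn d f i (x, y)) - f (x, y) * (∑ j, gradV x j * y j))
        * Real.exp (-V x - c)
      = ∑ i, fderiv ℝ (u i) x (ebase d i) := by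
    intro x
    by_cases hx : x ∈ D
    · have hfd := hasFDerivAt_fst_slice ((hf_smooth.differentiable two_ne_zero) (x, y))
      have hVd := (hgradV x hx).hasFDerivAt
      have hlin := (hVd.neg).sub_const c
      have hexp := (Real.hasDerivAt_exp (-V x - c)).comp_hasFDerivAt x hlin
      have hprod : ∀ i, HasFDerivAt (u i)
          ((1/2 * Bfn d f i (x, y) + f (x, y) * y i) •
              (Real.exp (-V x - c) • -(InnerProductSpace.toDual ℝ _ (gradV x)))
            + Real.exp (-V x - c) •
              ((1/2 : ℝ) • ((fderiv ℝ (Bfn d f i) (x, y)).comp (ContinuousLinearMap.inl ℝ _ _))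
                + (y i) • ((fderiv ℝ f (x, y)).comp (ContinuousLinearMap.inl ℝ _ _)))) x := by
        intro i
        have hBd := hasFDerivAt_fst_slice (((Bfn_contDiff hf_smooth i).differentiable one_ne_zero) (x, y))
        exact ((hBd.const_mul (1/2 : ℝ)).add (hfd.mul_const (y i))).mul hexp
      have heval : ∀ i, fderiv ℝ (u i) x (ebase d i)
          = (Real.exp (-V x - c) * (1/2)) * DBfn d f i (x, y)
            + Real.exp (-V x - c) * (y i * Bfn d f i (x, y))
            - ((Real.exp (-V x - c) * (1/2)) * (gradV x i * Bfn d f i (x, y))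
              + (Real.exp (-V x - c) * f (x, y)) * (gradV x i * y i)) := by
        intro i
        rw [(hprod i).fderiv]
        have htoDual : (InnerProductSpace.toDual ℝ (EuclideanSpace ℝ (Fin d)) (gradV x))
            (ebase d i) = gradV x i := by
          rw [InnerProductSpace.toDual_apply_apply, ebase, EuclideanSpace.inner_single_right]
          simp
        simp only [ContinuousLinearMap.add_apply, ContinuousLinearMap.smul_apply,
          ContinuousLinearMap.neg_apply, ContinuousLinearMap.comp_apply,
          ContinuousLinearMap.inl_apply, htoDual, smul_eq_mul]
        have h1 : (fderiv ℝ (Bfn d f i) (x, y)) (ebase d i, 0) = DBfn d f i (x, y) := rfl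
        have h2 : (fderiv ℝ f (x, y)) (ebase d i, 0) = Bfn d f i (x, y) := rfl
        rw [h1, h2]
        ring
      rw [Finset.sum_congr rfl fun i _ => heval i, Finset.sum_sub_distrib,
        Finset.sum_add_distrib, Finset.sum_add_distrib,
        ← Finset.mul_sum, ← Finset.mul_sum, ← Finset.mul_sum, ← Finset.mul_sum]
      have h3 : ∑ i, gradV x i * y i = ∑ j, gradV x j * y j := rfl
      rw [h3]
      ring
    · have hxy := hnotD x hx
      have hR : ∀ i, fderiv ℝ (u i) x = 0 := by
        intro i
        have hev : u i =ᶠ[nhds x] (fun _ => (0:ℝ)) :=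
          (huev x hxy).mono fun x' h => hu0 i x' h
        rw [Filter.EventuallyEq.fderiv_eq hev, fderiv_fun_const]
        rfl
      have hBz : ∀ i : Fin d, Bfn d f i (x, y) = 0 := fun i => Bfn_eq_zero i hxy
      have hDBz : ∀ i : Fin d, DBfn d f i (x, y) = 0 := fun i => DBfn_eq_zero i hxy
      have hfz : f (x, y) = 0 := image_eq_zero_of_notMem_tsupport hxy
      simp [hR, hBz, hDBz, hfz]
  rw [integral_congr_ae (Filter.Eventually.of_forall hident)]
  rw [integral_finset_sum Finset.univ (fun i _ => ?_)]
  · exact Finset.sum_eq_zero fun i _ => aux_int_fderiv_zero (u i) (hcd i) (hsupp i) (ebase d i)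
  · exact Continuous.integrable_of_hasCompactSupport
      (((hcd i).continuous_fderiv one_ne_zero).clm_apply continuous_const)
      ((hsupp i).fderiv_apply ℝ (ebase d i))

end StmtAux3

section StmtAux4

open ContinuousLinearMap

variable {d : ℕ}

lemma slice_y (D : Set (EuclideanSpace ℝ (Fin d)))
    (V : EuclideanSpace ℝ (Fin d) → ℝ)
    (gradV : EuclideanSpace ℝ (Fin d) → EuclideanSpace ℝ (Fin d))
    (Γ : Matrix (Fin d) (Fin d) ℝ) (hΓ_symm : Γ.transpose = Γ) (hΓ_pos : Γ.PosDef)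
    (f : EuclideanSpace ℝ (Fin d) × EuclideanSpace ℝ (Fin d) → ℝ)
    (hf_smooth : ContDiff ℝ 2 f) (hf_cpt : HasCompactSupport f)
    (hf_supp : tsupport f ⊆ D ×ˢ (Set.univ : Set (EuclideanSpace ℝ (Fin d))))
    (x : EuclideanSpace ℝ (Fin d)) :
    ∫ y, (-(1/2) * (∑ i, Γ.mulVec (fun j => gradV x j) i * Cfn d f i (x, y))
        + f (x, y) * (∑ j, gradV x j * y j)) * Real.exp (-V x - Qf d Γ⁻¹ y) = 0 := by
  classical
  have hΓinv_symm : (Γ⁻¹).transpose = Γ⁻¹ := by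
    rw [Matrix.transpose_nonsing_inv, hΓ_symm]
  have hdet : IsUnit Γ.det := isUnit_iff_ne_zero.mpr hΓ_pos.det_pos.ne'
  set k : Fin d → ℝ := fun i => Γ.mulVec (fun j => gradV x j) i with hk
  set v : Fin d → EuclideanSpace ℝ (Fin d) → ℝ := fun i y' =>
    (-(1/2) * k i) * f (x, y') * Real.exp (-V x - Qf d Γ⁻¹ y') with hv
  have hfc : ContDiff ℝ 1 (fun y' : EuclideanSpace ℝ (Fin d) => f (x, y')) :=
    (hf_smooth.of_le one_le_two).comp (contDiff_const.prodMk contDiff_id)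
  have hexpc : ContDiff ℝ 1 (fun y' : EuclideanSpace ℝ (Fin d) =>
      Real.exp (-V x - Qf d Γ⁻¹ y')) :=
    Real.contDiff_exp.comp (contDiff_const.sub ((aux_contDiff_Q Γ⁻¹).of_le one_le_two))
  have hcd : ∀ i, ContDiff ℝ 1 (v i) := fun i =>
    ((contDiff_const.mul hfc).mul hexpc)
  have hv0 : ∀ (i : Fin d) (y' : EuclideanSpace ℝ (Fin d)), (x, y') ∉ tsupport f →
      v i y' = 0 := by
    intro i y' h
    simp [hv, image_eq_zero_of_notMem_tsupport h]
  have hsupp : ∀ i, HasCompactSupport (v i) := by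
    intro i
    apply HasCompactSupport.intro (hf_cpt.image continuous_snd)
    intro y' hy'
    refine hv0 i y' fun hmem => hy' ?_
    exact ⟨(x, y'), hmem, rfl⟩
  have hident : ∀ y' : EuclideanSpace ℝ (Fin d),
      (-(1/2) * (∑ i, k i * Cfn d f i (x, y'))
        + f (x, y') * (∑ j, gradV x j * y' j)) * Real.exp (-V x - Qf d Γ⁻¹ y')
      = ∑ i, fderiv ℝ (v i) y' (ebase d i) := by
    intro y'
    obtain ⟨LQ, hQfd, hLQ⟩ := aux_hasFDerivAt_Q Γ⁻¹ hΓinv_symm y'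
    have hfd := hasFDerivAt_snd_slice ((hf_smooth.differentiable two_ne_zero) (x, y'))
    have hlin : HasFDerivAt (fun y'' => -V x - Qf d Γ⁻¹ y'') (-LQ) y' := hQfd.const_sub (-V x)
    have hexp := (Real.hasDerivAt_exp (-V x - Qf d Γ⁻¹ y')).comp_hasFDerivAt y' hlin
    have hprod : ∀ i, HasFDerivAt (v i)
        (((-(1/2) * k i) * f (x, y')) • (Real.exp (-V x - Qf d Γ⁻¹ y') • -LQ)
          + Real.exp (-V x - Qf d Γ⁻¹ y') •
            ((-(1/2) * k i) • ((fderiv ℝ f (x, y')).comp (ContinuousLinearMap.inr ℝ _ _)))) y' :=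
      fun i => (hfd.const_mul ((-(1/2) * k i))).mul hexp
    have heval : ∀ i, fderiv ℝ (v i) y' (ebase d i)
        = (Real.exp (-V x - Qf d Γ⁻¹ y') * (-(1/2))) * (k i * Cfn d f i (x, y'))
          + (Real.exp (-V x - Qf d Γ⁻¹ y') * f (x, y'))
            * (k i * Γ⁻¹.mulVec (fun j => y' j) i) := by
      intro i
      rw [(hprod i).fderiv]
      simp only [ContinuousLinearMap.add_apply, ContinuousLinearMap.smul_apply,
        ContinuousLinearMap.neg_apply, ContinuousLinearMap.comp_apply,
        ContinuousLinearMap.inr_apply, smul_eq_mul, hLQ i]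
      have h2 : (fderiv ℝ f (x, y')) ((0 : EuclideanSpace ℝ (Fin d)), ebase d i)
          = Cfn d f i (x, y') := rfl
      rw [h2]
      ring
    rw [Finset.sum_congr rfl fun i _ => heval i, Finset.sum_add_distrib,
      ← Finset.mul_sum, ← Finset.mul_sum]
    have hcancel : ∑ i, k i * Γ⁻¹.mulVec (fun j => y' j) i = ∑ j, gradV x j * y' j := by
      have := aux_matrix_cancel Γ hΓ_symm hdet (fun j => gradV x j) (fun j => y' j)
      simpa [hk] using this
    rw [hcancel]
    ring
  rw [integral_congr_ae (Filter.Eventually.of_forall hident)]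
  rw [integral_finset_sum Finset.univ (fun i _ => ?_)]
  · exact Finset.sum_eq_zero fun i _ => aux_int_fderiv_zero (v i) (hcd i) (hsupp i) (ebase d i)
  · exact Continuous.integrable_of_hasCompactSupport
      (((hcd i).continuous_fderiv one_ne_zero).clm_apply continuous_const)
      ((hsupp i).fderiv_apply ℝ (ebase d i))

end StmtAux4

noncomputable section StmtAux5

open ContinuousLinearMap

variable {d : ℕ}

variable (d) in
def gXfn (V : EuclideanSpace ℝ (Fin d) → ℝ)
    (gradV : EuclideanSpace ℝ (Fin d) → EuclideanSpace ℝ (Fin d))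
    (Γ : Matrix (Fin d) (Fin d) ℝ)
    (f : EuclideanSpace ℝ (Fin d) × EuclideanSpace ℝ (Fin d) → ℝ) :
    EuclideanSpace ℝ (Fin d) × EuclideanSpace ℝ (Fin d) → ℝ := fun p =>
  (1/2 * (∑ i, DBfn d f i p) - 1/2 * (∑ i, gradV p.1 i * Bfn d f i p)
    + (∑ i, p.2 i * Bfn d f i p) - f p * (∑ j, gradV p.1 j * p.2 j))
    * Real.exp (-V p.1 - Qf d Γ⁻¹ p.2)

variable (d) in
def gYfn (V : EuclideanSpace ℝ (Fin d) → ℝ)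
    (gradV : EuclideanSpace ℝ (Fin d) → EuclideanSpace ℝ (Fin d))
    (Γ : Matrix (Fin d) (Fin d) ℝ)
    (f : EuclideanSpace ℝ (Fin d) × EuclideanSpace ℝ (Fin d) → ℝ) :
    EuclideanSpace ℝ (Fin d) × EuclideanSpace ℝ (Fin d) → ℝ := fun p =>
  (-(1/2) * (∑ i, Γ.mulVec (fun j => gradV p.1 j) i * Cfn d f i p)
    + f p * (∑ j, gradV p.1 j * p.2 j)) * Real.exp (-V p.1 - Qf d Γ⁻¹ p.2)

variable {V : EuclideanSpace ℝ (Fin d) → ℝ}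
variable {gradV : EuclideanSpace ℝ (Fin d) → EuclideanSpace ℝ (Fin d)}
variable {Γ : Matrix (Fin d) (Fin d) ℝ}
variable {f : EuclideanSpace ℝ (Fin d) × EuclideanSpace ℝ (Fin d) → ℝ}
variable {D : Set (EuclideanSpace ℝ (Fin d))}

lemma gXfn_eq_zero {p} (hp : p ∉ tsupport f) : gXfn d V gradV Γ f p = 0 := by
  simp [gXfn, fun i : Fin d => Bfn_eq_zero (f := f) i hp,
    fun i : Fin d => DBfn_eq_zero (f := f) i hp, image_eq_zero_of_notMem_tsupport hp]

lemma gYfn_eq_zero {p} (hp : p ∉ tsupport f) : gYfn d V gradV Γ f p = 0 := by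
  simp [gYfn, fun i : Fin d => Cfn_eq_zero (f := f) i hp, image_eq_zero_of_notMem_tsupport hp]

lemma gradV_continuousOn (hD_open : IsOpen D) (hV_smooth : ContDiffOn ℝ 1 V D)
    (hgradV : ∀ x ∈ D, HasGradientAt V (gradV x) x) : ContinuousOn gradV D := by
  have h1 : ContinuousOn (fderiv ℝ V) D := hV_smooth.continuousOn_fderiv_of_isOpen hD_open le_rfl
  have h2 : ∀ x ∈ D, gradV x
      = (InnerProductSpace.toDual ℝ (EuclideanSpace ℝ (Fin d))).symm (fderiv ℝ V x) := by
    intro x hx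
    rw [(hgradV x hx).hasFDerivAt.fderiv]
    simp
  exact ContinuousOn.congr
    ((InnerProductSpace.toDual ℝ (EuclideanSpace ℝ (Fin d))).symm.continuous.comp_continuousOn h1)
    h2

lemma gXfn_continuous (hD_open : IsOpen D) (hV_smooth : ContDiffOn ℝ 1 V D)
    (hgradV : ∀ x ∈ D, HasGradientAt V (gradV x) x)
    (hf_smooth : ContDiff ℝ 2 f)
    (hf_supp : tsupport f ⊆ D ×ˢ (Set.univ : Set (EuclideanSpace ℝ (Fin d)))) :
    Continuous (gXfn d V gradV Γ f) := by
  rw [continuous_iff_continuousAt]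
  intro p
  by_cases hp : p.1 ∈ D
  · have hgV : ContinuousAt (fun q : EuclideanSpace ℝ (Fin d) × EuclideanSpace ℝ (Fin d) =>
        gradV q.1) p :=
      ((gradV_continuousOn hD_open hV_smooth hgradV).continuousAt
        (hD_open.mem_nhds hp)).comp continuousAt_fst
    have hgVi : ∀ i : Fin d, ContinuousAt (fun q :
        EuclideanSpace ℝ (Fin d) × EuclideanSpace ℝ (Fin d) => gradV q.1 i) p := fun i =>
      ((EuclideanSpace.proj (𝕜 := ℝ) i).continuous.continuousAt).comp hgV
    have hV : ContinuousAt (fun q : EuclideanSpace ℝ (Fin d) × EuclideanSpace ℝ (Fin d) =>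
        V q.1) p :=
      ((hV_smooth.continuousOn.continuousAt (hD_open.mem_nhds hp))).comp continuousAt_fst
    have hDB : ∀ i : Fin d, Continuous (DBfn d f i) := fun i =>
      ((Bfn_contDiff hf_smooth i).continuous_fderiv one_ne_zero).clm_apply continuous_const
    have hB : ∀ i : Fin d, Continuous (Bfn d f i) := fun i =>
      (Bfn_contDiff hf_smooth i).continuous
    have hsnd : ∀ i : Fin d, Continuous (fun q :
        EuclideanSpace ℝ (Fin d) × EuclideanSpace ℝ (Fin d) => q.2 i) := fun i =>
      (EuclideanSpace.proj (𝕜 := ℝ) i).continuous.comp continuous_snd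
    have hQ : Continuous (Qf d Γ⁻¹) := (aux_contDiff_Q Γ⁻¹).continuous
    have hw : ContinuousAt (fun q : EuclideanSpace ℝ (Fin d) × EuclideanSpace ℝ (Fin d) =>
        Real.exp (-V q.1 - Qf d Γ⁻¹ q.2)) p :=
      Real.continuous_exp.continuousAt.comp
        ((hV.neg).sub ((hQ.comp continuous_snd).continuousAt))
    refine ContinuousAt.mul ?_ hw
    refine ContinuousAt.sub (ContinuousAt.add (ContinuousAt.sub ?_ ?_) ?_) ?_
    · exact ContinuousAt.mul continuousAt_const
        (tendsto_finset_sum _ fun i _ => (hDB i).continuousAt)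
    · exact ContinuousAt.mul continuousAt_const
        (tendsto_finset_sum _ fun i _ => (hgVi i).mul (hB i).continuousAt)
    · exact tendsto_finset_sum _ fun i _ => ((hsnd i).continuousAt).mul (hB i).continuousAt
    · exact ContinuousAt.mul hf_smooth.continuous.continuousAt
        (tendsto_finset_sum _ fun j _ => (hgVi j).mul ((hsnd j).continuousAt))
  · have hpt : p ∉ tsupport f := fun h => hp (hf_supp h).1
    have hev : ∀ᶠ q in nhds p, q ∉ tsupport f :=
      ((isOpen_compl_iff.mpr (isClosed_tsupport f)).eventually_mem hpt).mono fun q h => h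
    have : gXfn d V gradV Γ f =ᶠ[nhds p] (fun _ => (0:ℝ)) :=
      hev.mono fun q hq => gXfn_eq_zero hq
    rw [continuousAt_congr this]
    exact continuousAt_const

lemma gYfn_continuous (hD_open : IsOpen D) (hV_smooth : ContDiffOn ℝ 1 V D)
    (hgradV : ∀ x ∈ D, HasGradientAt V (gradV x) x)
    (hf_smooth : ContDiff ℝ 2 f)
    (hf_supp : tsupport f ⊆ D ×ˢ (Set.univ : Set (EuclideanSpace ℝ (Fin d)))) :
    Continuous (gYfn d V gradV Γ f) := by
  rw [continuous_iff_continuousAt]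
  intro p
  by_cases hp : p.1 ∈ D
  · have hgV : ContinuousAt (fun q : EuclideanSpace ℝ (Fin d) × EuclideanSpace ℝ (Fin d) =>
        gradV q.1) p :=
      ((gradV_continuousOn hD_open hV_smooth hgradV).continuousAt
        (hD_open.mem_nhds hp)).comp continuousAt_fst
    have hgVi : ∀ i : Fin d, ContinuousAt (fun q :
        EuclideanSpace ℝ (Fin d) × EuclideanSpace ℝ (Fin d) => gradV q.1 i) p := fun i =>
      ((EuclideanSpace.proj (𝕜 := ℝ) i).continuous.continuousAt).comp hgV
    have hkc : ∀ i : Fin d, ContinuousAt (fun q :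
        EuclideanSpace ℝ (Fin d) × EuclideanSpace ℝ (Fin d) =>
        Γ.mulVec (fun j => gradV q.1 j) i) p := by
      intro i
      have : (fun q : EuclideanSpace ℝ (Fin d) × EuclideanSpace ℝ (Fin d) =>
          Γ.mulVec (fun j => gradV q.1 j) i)
          = fun q => ∑ j, Γ i j * gradV q.1 j := by
        funext q; simp [Matrix.mulVec, dotProduct]
      rw [this]
      exact tendsto_finset_sum _ fun j _ => continuousAt_const.mul (hgVi j)
    have hV : ContinuousAt (fun q : EuclideanSpace ℝ (Fin d) × EuclideanSpace ℝ (Fin d) =>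
        V q.1) p :=
      ((hV_smooth.continuousOn.continuousAt (hD_open.mem_nhds hp))).comp continuousAt_fst
    have hC : ∀ i : Fin d, Continuous (Cfn d f i) := fun i =>
      (Cfn_contDiff hf_smooth i).continuous
    have hsnd : ∀ i : Fin d, Continuous (fun q :
        EuclideanSpace ℝ (Fin d) × EuclideanSpace ℝ (Fin d) => q.2 i) := fun i =>
      (EuclideanSpace.proj (𝕜 := ℝ) i).continuous.comp continuous_snd
    have hQ : Continuous (Qf d Γ⁻¹) := (aux_contDiff_Q Γ⁻¹).continuous
    have hw : ContinuousAt (fun q : EuclideanSpace ℝ (Fin d) × EuclideanSpace ℝ (Fin d) =>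
        Real.exp (-V q.1 - Qf d Γ⁻¹ q.2)) p :=
      Real.continuous_exp.continuousAt.comp
        ((hV.neg).sub ((hQ.comp continuous_snd).continuousAt))
    refine ContinuousAt.mul (ContinuousAt.add ?_ ?_) hw
    · exact ContinuousAt.mul continuousAt_const
        (tendsto_finset_sum _ fun i _ => (hkc i).mul (hC i).continuousAt)
    · exact ContinuousAt.mul hf_smooth.continuous.continuousAt
        (tendsto_finset_sum _ fun j _ => (hgVi j).mul ((hsnd j).continuousAt))
  · have hpt : p ∉ tsupport f := fun h => hp (hf_supp h).1
    have hev : ∀ᶠ q in nhds p, q ∉ tsupport f :=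
      ((isOpen_compl_iff.mpr (isClosed_tsupport f)).eventually_mem hpt).mono fun q h => h
    have : gYfn d V gradV Γ f =ᶠ[nhds p] (fun _ => (0:ℝ)) :=
      hev.mono fun q hq => gYfn_eq_zero hq
    rw [continuousAt_congr this]
    exact continuousAt_const

end StmtAux5

/-- The product measure `c·1_D(x)·e^{−V(x)}·e^{−⟪Γ⁻¹y,y⟫} dx dy` annihilates the
generator `𝒢f = (1/2)Δ_x f − (1/2)⟨∇V, ∇_x f⟩ + ⟨y, ∇_x f⟩ − (1/2)⟨Γ∇V, ∇_y f⟩`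
on C² functions with compact support in `D × ℝ^d`. -/
theorem stmt_7 (d : ℕ)
    (D : Set (EuclideanSpace ℝ (Fin d))) (hD_open : IsOpen D)
    (V : EuclideanSpace ℝ (Fin d) → ℝ) (hV_smooth : ContDiffOn ℝ 1 V D)
    (gradV : EuclideanSpace ℝ (Fin d) → EuclideanSpace ℝ (Fin d))
    (hgradV : ∀ x ∈ D, HasGradientAt V (gradV x) x)
    (Γ : Matrix (Fin d) (Fin d) ℝ) (hΓ_symm : Γ.transpose = Γ) (hΓ_pos : Γ.PosDef)
    (f : EuclideanSpace ℝ (Fin d) × EuclideanSpace ℝ (Fin d) → ℝ)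
    (hf_smooth : ContDiff ℝ 2 f) (hf_cpt : HasCompactSupport f)
    (hf_supp : tsupport f ⊆ D ×ˢ (Set.univ : Set (EuclideanSpace ℝ (Fin d)))) :
    ∫ p in D ×ˢ (Set.univ : Set (EuclideanSpace ℝ (Fin d))),
      ((1/2 : ℝ) * (∑ i : Fin d,
          fderiv ℝ (fun x => fderiv ℝ (fun x' => f (x', p.2)) x (EuclideanSpace.single i 1))
            p.1 (EuclideanSpace.single i 1))
        - (1/2 : ℝ) * (∑ i : Fin d,
            gradV p.1 i * fderiv ℝ (fun x => f (x, p.2)) p.1 (EuclideanSpace.single i 1))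
        + (∑ i : Fin d,
            p.2 i * fderiv ℝ (fun x => f (x, p.2)) p.1 (EuclideanSpace.single i 1))
        - (1/2 : ℝ) * (∑ i : Fin d,
            Γ.mulVec (fun j => gradV p.1 j) i *
              fderiv ℝ (fun y => f (p.1, y)) p.2 (EuclideanSpace.single i 1)))
      * Real.exp (- V p.1 -
          ⟪(EuclideanSpace.equiv (Fin d) ℝ).symm (Γ⁻¹.mulVec (fun i => p.2 i)), p.2⟫) = 0 := by
  classical
  have hSmeas : MeasurableSet (D ×ˢ (Set.univ : Set (EuclideanSpace ℝ (Fin d)))) :=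
    hD_open.measurableSet.prod MeasurableSet.univ
  have hQe : ∀ z : EuclideanSpace ℝ (Fin d),
      ⟪(EuclideanSpace.equiv (Fin d) ℝ).symm (Γ⁻¹.mulVec (fun i => z i)), z⟫
        = Qf d Γ⁻¹ z := by
    intro z
    rw [PiLp.inner_apply]
    exact Finset.sum_congr rfl fun j _ => by exact (RCLike.inner_apply' _ _).trans rfl
  have hpoint : ∀ p : EuclideanSpace ℝ (Fin d) × EuclideanSpace ℝ (Fin d),
      ((1/2 : ℝ) * (∑ i : Fin d,
          fderiv ℝ (fun x => fderiv ℝ (fun x' => f (x', p.2)) x (EuclideanSpace.single i 1))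
            p.1 (EuclideanSpace.single i 1))
        - (1/2 : ℝ) * (∑ i : Fin d,
            gradV p.1 i * fderiv ℝ (fun x => f (x, p.2)) p.1 (EuclideanSpace.single i 1))
        + (∑ i : Fin d,
            p.2 i * fderiv ℝ (fun x => f (x, p.2)) p.1 (EuclideanSpace.single i 1))
        - (1/2 : ℝ) * (∑ i : Fin d,
            Γ.mulVec (fun j => gradV p.1 j) i *
              fderiv ℝ (fun y => f (p.1, y)) p.2 (EuclideanSpace.single i 1)))
      * Real.exp (- V p.1 -
          ⟪(EuclideanSpace.equiv (Fin d) ℝ).symm (Γ⁻¹.mulVec (fun i => p.2 i)), p.2⟫)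
      = gXfn d V gradV Γ f p + gYfn d V gradV Γ f p := by
    rintro ⟨px, py⟩
    have e1 : ∀ i : Fin d, fderiv ℝ
        (fun x => fderiv ℝ (fun x' => f (x', py)) x (EuclideanSpace.single i 1)) px
          (EuclideanSpace.single i 1) = DBfn d f i (px, py) := by
      intro i
      have := fderiv2_eq hf_smooth px py i
      simpa [ebase] using this
    have e2 : ∀ i : Fin d, fderiv ℝ (fun x => f (x, py)) px (EuclideanSpace.single i 1)
        = Bfn d f i (px, py) := by
      intro i
      have := fderiv_fst_eq hf_smooth px py i
      simpa [ebase] using this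
    have e3 : ∀ i : Fin d, fderiv ℝ (fun y => f (px, y)) py (EuclideanSpace.single i 1)
        = Cfn d f i (px, py) := by
      intro i
      have := fderiv_snd_eq hf_smooth px py i
      simpa [ebase] using this
    simp only [e1, e2, e3, hQe]
    simp only [gXfn, gYfn]
    ring
  rw [setIntegral_congr_fun hSmeas fun p _ => hpoint p]
  have hvanish : ∀ p ∉ D ×ˢ (Set.univ : Set (EuclideanSpace ℝ (Fin d))),
      gXfn d V gradV Γ f p + gYfn d V gradV Γ f p = 0 := by
    intro p hp
    have hpt : p ∉ tsupport f := fun h => hp (hf_supp h)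
    rw [gXfn_eq_zero hpt, gYfn_eq_zero hpt, add_zero]
  rw [setIntegral_eq_integral_of_forall_compl_eq_zero hvanish]
  have hgXc := gXfn_continuous (Γ := Γ) hD_open hV_smooth hgradV hf_smooth hf_supp
  have hgYc := gYfn_continuous (Γ := Γ) hD_open hV_smooth hgradV hf_smooth hf_supp
  have hgXs : HasCompactSupport (gXfn d V gradV Γ f) :=
    HasCompactSupport.intro hf_cpt fun p hp => gXfn_eq_zero hp
  have hgYs : HasCompactSupport (gYfn d V gradV Γ f) :=
    HasCompactSupport.intro hf_cpt fun p hp => gYfn_eq_zero hp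
  have hIX : Integrable (gXfn d V gradV Γ f) := hgXc.integrable_of_hasCompactSupport hgXs
  have hIY : Integrable (gYfn d V gradV Γ f) := hgYc.integrable_of_hasCompactSupport hgYs
  rw [integral_add hIX hIY]
  have hprodX : Integrable (gXfn d V gradV Γ f)
      ((volume : Measure (EuclideanSpace ℝ (Fin d))).prod volume) := by
    exact hIX
  have hprodY : Integrable (gYfn d V gradV Γ f)
      ((volume : Measure (EuclideanSpace ℝ (Fin d))).prod volume) := by
    exact hIY
  have h1 : ∫ p, gXfn d V gradV Γ f p = 0 := by
    rw [show (volume : Measure (EuclideanSpace ℝ (Fin d) × EuclideanSpace ℝ (Fin d)))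
        = (volume : Measure (EuclideanSpace ℝ (Fin d))).prod volume from Measure.volume_eq_prod _ _,
      integral_prod_symm _ hprodX]
    have hinner : ∀ y, ∫ x, gXfn d V gradV Γ f (x, y) = 0 := by
      intro y
      have := slice_x D hD_open V hV_smooth gradV hgradV Γ f hf_smooth hf_cpt hf_supp y
      simpa [gXfn] using this
    simp only [hinner, integral_zero]
  have h2 : ∫ p, gYfn d V gradV Γ f p = 0 := by
    rw [show (volume : Measure (EuclideanSpace ℝ (Fin d) × EuclideanSpace ℝ (Fin d)))
        = (volume : Measure (EuclideanSpace ℝ (Fin d))).prod volume from Measure.volume_eq_prod _ _,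
      integral_prod _ hprodY]
    have hinner : ∀ x, ∫ y, gYfn d V gradV Γ f (x, y) = 0 := by
      intro x
      have := slice_y D V gradV Γ hΓ_symm hΓ_pos f hf_smooth hf_cpt hf_supp x
      simpa [gYfn] using this
    simp only [hinner, integral_zero]
  rw [h1, h2, add_zero]
end StmtAux
end

section
/- Let 𝒳 be a separable metrizable topological space with its Borel σ-algebra, let (P_t)_{t≥0} be a family of Markov transition probability kernels on 𝒳 satisfying the Chapman–Kolmogorov relation P_{t+s}(y, A) = ∫ P_t(y', A) P_s(y, dy') for all s, t ≥ 0, y ∈ 𝒳 and Borel A, and such that (t, y) ↦ P_t(y, A) is jointly measurable for every Borel A. Let x* ∈ 𝒳 and suppose: (iii) there is a Borel measurable function s : 𝒳 → [0, ∞) such that for every y ∈ 𝒳 and every open neighborhood W of x*, P_{s(y)}(y, W) > 0; and (iv) for every open neighborhood U of x* there exist an open neighborhood U' ⊆ U of x* and T_U > 0 such that inf_{y ∈ U'} P_t(y, U) > 0 for every t ∈ [0, T_U). Then every invariant probability measure π for (P_t) satisfies π(U) > 0 for every open neighborhood U of x*; that is, x* belongs to the support of every invariant probability measure. -/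
open MeasureTheory
open scoped ENNReal

/-- For a Markov semigroup `(P_t)` on a separable metrizable space, if (iii) from every
point `y` some `P_{s(y)}(y, ·)` charges every neighborhood of `x*`, and (iv) near `x*`
the transition probabilities into a neighborhood `U` of `x*` are uniformly positive for
small times, then `x*` belongs to the support of every invariant probability measure. -/
theorem stmt_8 {𝒳 : Type*} [TopologicalSpace 𝒳] [MeasurableSpace 𝒳] [BorelSpace 𝒳]
    [TopologicalSpace.SeparableSpace 𝒳] [TopologicalSpace.MetrizableSpace 𝒳]
    (P : ℝ → 𝒳 → Measure 𝒳)
    (hP_prob : ∀ t y, IsProbabilityMeasure (P t y))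
    (hP_meas : ∀ A : Set 𝒳, MeasurableSet A →
      Measurable (fun p : ℝ × 𝒳 => P p.1 p.2 A))
    (hCK : ∀ s t : ℝ, 0 ≤ s → 0 ≤ t → ∀ y : 𝒳, ∀ A : Set 𝒳, MeasurableSet A →
      P (t + s) y A = ∫⁻ y', P t y' A ∂(P s y))
    (xstar : 𝒳)
    (hiii : ∃ s : 𝒳 → ℝ, Measurable s ∧ (∀ y, 0 ≤ s y) ∧
      ∀ y : 𝒳, ∀ W : Set 𝒳, IsOpen W → xstar ∈ W → 0 < P (s y) y W)
    (hiv : ∀ U : Set 𝒳, IsOpen U → xstar ∈ U →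
      ∃ U' : Set 𝒳, U' ⊆ U ∧ IsOpen U' ∧ xstar ∈ U' ∧
        ∃ T : ℝ, 0 < T ∧ ∀ t : ℝ, 0 ≤ t → t < T →
          ∃ ε : ℝ≥0∞, 0 < ε ∧ ∀ y ∈ U', ε ≤ P t y U)
    (π : Measure 𝒳) [IsProbabilityMeasure π]
    (hπ_inv : ∀ t : ℝ, 0 ≤ t → ∀ A : Set 𝒳, MeasurableSet A →
      π A = ∫⁻ y, P t y A ∂π)
    (U : Set 𝒳) (hU_open : IsOpen U) (hxU : xstar ∈ U) :
    0 < π U := by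
  by_contra hcon
  rw [pos_iff_ne_zero, not_ne_iff] at hcon
  obtain ⟨s, hs_meas, hs0, hs_pos⟩ := hiii
  obtain ⟨U', hU'U, hU'open, hxU', T, hT0, hT⟩ := hiv U hU_open hxU
  set μ : Measure ℝ := (volume : Measure ℝ).restrict (Set.Ici 0) with hμ
  have hUm : MeasurableSet U := hU_open.measurableSet
  -- uncurried measurability
  have hmeasF : Measurable (fun p : 𝒳 × ℝ => P p.2 p.1 U) :=
    (hP_meas U hUm).comp measurable_swap
  -- the double integral vanishes
  have hdouble : ∫⁻ y, ∫⁻ r, P r y U ∂μ ∂π = 0 := by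
    have hswap : ∫⁻ y, ∫⁻ r, P r y U ∂μ ∂π = ∫⁻ r, ∫⁻ y, P r y U ∂π ∂μ :=
      lintegral_lintegral_swap hmeasF.aemeasurable
    rw [hswap]
    have : ∀ᵐ r ∂μ, (∫⁻ y, P r y U ∂π) = 0 := by
      filter_upwards [ae_restrict_mem measurableSet_Ici] with r hr
      rw [← hπ_inv r hr U hUm, hcon]
    rw [lintegral_congr_ae this, lintegral_zero]
  -- hence for some y the inner integral vanishes
  have hg_meas : Measurable (fun y => ∫⁻ r, P r y U ∂μ) :=
    Measurable.lintegral_prod_right hmeasF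
  have hae : ∀ᵐ y ∂π, (∫⁻ r, P r y U ∂μ) = 0 :=
    (lintegral_eq_zero_iff hg_meas).mp hdouble
  have hπne : π ≠ 0 := IsProbabilityMeasure.ne_zero π
  have : Filter.NeBot (ae π) := MeasureTheory.ae_neBot.mpr hπne
  obtain ⟨y, hy⟩ := hae.exists
  -- positivity of P r y U for r ∈ [s y, s y + T)
  have hpos : ∀ r ∈ Set.Ico (s y) (s y + T), 0 < P r y U := by
    intro r hr
    have ht0 : 0 ≤ r - s y := sub_nonneg.mpr hr.1
    have htT : r - s y < T := by linarith [hr.2]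
    obtain ⟨ε, hε, hεle⟩ := hT (r - s y) ht0 htT
    have hck := hCK (s y) (r - s y) (hs0 y) ht0 y U hUm
    have hre : r - s y + s y = r := sub_add_cancel r (s y)
    rw [hre] at hck
    have hPy : 0 < P (s y) y U' := hs_pos y U' hU'open hxU'
    have hmt : Measurable (fun z => P (r - s y) z U) :=
      (hP_meas U hUm).comp (measurable_const.prodMk measurable_id)
    calc 0 < ε * P (s y) y U' := ENNReal.mul_pos hε.ne' hPy.ne'
      _ = ∫⁻ _ in U', ε ∂(P (s y) y) := by
          rw [setLIntegral_const]
      _ ≤ ∫⁻ z in U', P (r - s y) z U ∂(P (s y) y) :=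
          setLIntegral_mono hmt (fun z hz => hεle z hz)
      _ ≤ ∫⁻ z, P (r - s y) z U ∂(P (s y) y) := setLIntegral_le_lintegral _ _
      _ = P r y U := hck.symm
  -- but the lintegral over μ vanishes, contradiction on Ico (s y) (s y + T)
  have hmt' : Measurable (fun r => P r y U) :=
    (hP_meas U hUm).comp (measurable_id.prodMk measurable_const)
  have hIco : Set.Ico (s y) (s y + T) ⊆ Set.Ici 0 := fun r hr => le_trans (hs0 y) hr.1
  have hsub : ∫⁻ r in Set.Ico (s y) (s y + T), P r y U ∂(volume : Measure ℝ) = 0 := by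
    have hle : ∫⁻ r in Set.Ico (s y) (s y + T), P r y U ∂(volume : Measure ℝ)
        ≤ ∫⁻ r, P r y U ∂μ := by
      rw [hμ]
      exact lintegral_mono_set hIco
    exact le_antisymm (hy ▸ hle) zero_le
  have hae2 : ∀ᵐ r ∂(volume : Measure ℝ).restrict (Set.Ico (s y) (s y + T)),
      P r y U = 0 :=
    (lintegral_eq_zero_iff hmt').mp hsub
  have hne0 : (volume : Measure ℝ).restrict (Set.Ico (s y) (s y + T)) ≠ 0 := by
    intro h
    have : (volume : Measure ℝ) (Set.Ico (s y) (s y + T)) = 0 := by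
      have := congrArg (fun m : Measure ℝ => m (Set.Ico (s y) (s y + T))) h
      simpa [Measure.restrict_apply measurableSet_Ico] using this
    rw [Real.volume_Ico] at this
    simp only [ENNReal.ofReal_eq_zero] at this
    linarith
  have : Filter.NeBot (ae ((volume : Measure ℝ).restrict (Set.Ico (s y) (s y + T)))) :=
    MeasureTheory.ae_neBot.mpr hne0
  obtain ⟨r, hrmem, hr0⟩ := (hae2.and (ae_restrict_mem measurableSet_Ico)).exists
  exact (hpos r hr0).ne' hrmem
end
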